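/- Let l, n ≥ 1 and let B₁, …, B_l be n×n matrices with entries in the polynomial ring ℝ[q₁, …, q_l]. Suppose that for all i, j ∈ {1, …, l} one has (entrywise) q_i·∂B_j/∂q_i = q_j·∂B_i/∂q_j. Then for every i ∈ {1, …, l}, every monomial q₁^{d₁}⋯q_l^{d_l} with (d₁, …, d_l) ≠ 0 that occurs with nonzero coefficient in some entry of B_i satisfies d_i > 0; equivalently, B_i minus its constant term (the part with d = 0) is divisible by q_i. -/

import Mathlib

open MvPolynomial

lemma key_coeff_X_mul_pderiv {l : ℕ} (i : Fin l) (p : MvPolynomial (Fin l) ℝ)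
    (d : Fin l →₀ ℕ) :
    MvPolynomial.coeff d (MvPolynomial.X i * MvPolynomial.pderiv i p)
      = (d i : ℝ) * MvPolynomial.coeff d p := by
  induction p using MvPolynomial.induction_on' with
  | add p q hp hq =>
    rw [map_add, mul_add, coeff_add, coeff_add, hp, hq, mul_add]
  | monomial s a =>
    rw [pderiv_monomial, X, monomial_mul, one_mul]
    by_cases hs : s i = 0
    · simp only [hs, Nat.cast_zero, mul_zero, monomial_zero, coeff_zero, coeff_monomial]
      by_cases hd : s = d
      · subst hd; simp [hs]
      · simp [hd]
    · have hss : Finsupp.single i 1 + (s - Finsupp.single i 1) = s := by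
        ext j
        by_cases hj : j = i
        · subst hj
          simp [Finsupp.single_apply, Nat.succ_le_of_lt (Nat.pos_of_ne_zero hs),
            Nat.add_sub_cancel' (Nat.one_le_iff_ne_zero.mpr hs)]
        · simp [Finsupp.single_apply, Ne.symm hj, hj]
      rw [hss, coeff_monomial, coeff_monomial]
      by_cases hd : d = s
      · subst hd; simp [mul_comm]
      · simp [hd, Ne.symm hd]

/-- Lemma 4.1: if matrices `B₁, …, B_l` over `ℝ[q₁,…,q_l]` satisfy (entrywise)
`q_i·∂B_j/∂q_i = q_j·∂B_i/∂q_j`, then every nonconstant monomial occurring in an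
entry of `B_i` is a multiple of `q_i`. -/
theorem stmt_2 (l n : ℕ) (hl : 1 ≤ l) (hn : 1 ≤ n)
    (B : Fin l → Matrix (Fin n) (Fin n) (MvPolynomial (Fin l) ℝ))
    (hB : ∀ i j (a b : Fin n),
      MvPolynomial.X i * MvPolynomial.pderiv i (B j a b)
        = MvPolynomial.X j * MvPolynomial.pderiv j (B i a b)) :
    ∀ (i : Fin l) (a b : Fin n) (d : Fin l →₀ ℕ), d ≠ 0 →
      MvPolynomial.coeff d (B i a b) ≠ 0 → 0 < d i := by
  intro i a b d hd hc
  by_contra hdi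
  push_neg at hdi
  have hdi0 : d i = 0 := Nat.le_zero.mp hdi
  obtain ⟨j, hj⟩ : ∃ j, d j ≠ 0 := by
    by_contra h
    push_neg at h
    exact hd (Finsupp.ext h)
  have := congrArg (MvPolynomial.coeff d) (hB i j a b)
  rw [key_coeff_X_mul_pderiv, key_coeff_X_mul_pderiv, hdi0] at this
  simp only [Nat.cast_zero, zero_mul] at this
  have : MvPolynomial.coeff d (B i a b) = 0 := by
    rcases mul_eq_zero.mp this.symm with h | h
    · exact absurd (Nat.cast_eq_zero.mp h) hj
    · exact h
  exact hc this
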